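/- Let m = 2^a for some a ≥ 1, let A be a partial cyclic pair set in ℤ/m, and let x be the maximal point of A. Then for every integer r with 1 ≤ r ≤ m − 1, the point x − r is not an r-maximal point of A. -/

import Mathlib

/-- Lexicographic comparison of sets of naturals: `S ≤ T` iff `S = T` or the least
element of the symmetric difference `S Δ T` lies in `T`. -/
def LexLE (S T : Set ℕ) : Prop :=
  S = T ∨ ∃ i : ℕ, i ∈ T ∧ i ∉ S ∧ ∀ j < i, (j ∈ S ↔ j ∈ T)

/-- The restriction `A|_[x,x+r)` of `A ⊆ ℤ/m` to the length-`r` interval starting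
at `x`, viewed as a subset of `{0, …, r−1}`. -/
def restrictSet (m : ℕ) (A : Set (ZMod m)) (x : ZMod m) (r : ℕ) : Set ℕ :=
  { i | i < r ∧ x + (i : ZMod m) ∈ A }

/-- `x` is an `r`-maximal point of `A`: `A|_[x,x+r)` is lexicographically maximal
among all `A|_[y,y+r)`.  A point is maximal when it is `m`-maximal. -/
def IsMaxPt (m : ℕ) (A : Set (ZMod m)) (r : ℕ) (x : ZMod m) : Prop :=
  ∀ y : ZMod m, LexLE (restrictSet m A y r) (restrictSet m A x r)

/-- `x` is an `r`-minimal point of `A`: `A|_[x,x+r)` is lexicographically minimal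
among all `A|_[y,y+r)`. -/
def IsMinPt (m : ℕ) (A : Set (ZMod m)) (r : ℕ) (x : ZMod m) : Prop :=
  ∀ y : ZMod m, LexLE (restrictSet m A x r) (restrictSet m A y r)

/-- The opposite point of `x` in `ℤ/m` (for `m` even): `x + m/2`. -/
def Opp (m : ℕ) (x : ZMod m) : ZMod m := x + ((m / 2 : ℕ) : ZMod m)

/-- A (full cyclic) pair set: a subset of `ℤ/m` containing exactly one point of each
opposite pair `{x, x + m/2}`. -/
def IsPairSet (m : ℕ) (A : Set (ZMod m)) : Prop :=
  ∀ x : ZMod m, Xor' (x ∈ A) (Opp m x ∈ A)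

/-- A partial cyclic pair set: a nonempty subset of `ℤ/m` containing at most one point
of each opposite pair. -/
def IsPartialPairSet (m : ℕ) (A : Set (ZMod m)) : Prop :=
  A.Nonempty ∧ ∀ x : ZMod m, ¬(x ∈ A ∧ Opp m x ∈ A)

/-- A free point of a partial cyclic pair set `A`: neither it nor its opposite point
belongs to `A`. -/
def IsFreePt (m : ℕ) (A : Set (ZMod m)) (x : ZMod m) : Prop :=
  x ∉ A ∧ Opp m x ∉ A

lemma lex_contra {S T : Set ℕ} (h : LexLE S T) {i : ℕ}
    (hiS : i ∈ S) (hiT : i ∉ T) (hag : ∀ j < i, (j ∈ S ↔ j ∈ T)) : False := by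
  rcases h with h | ⟨i', hT', hS', hag'⟩
  · exact hiT (h ▸ hiS)
  · rcases lt_trichotomy i i' with h1 | rfl | h1
    · exact hiT ((hag' i h1).mp hiS)
    · exact hS' hiS
    · exact hS' ((hag i' h1).mpr hT')

lemma exists_half (a : ℕ) (ha : 1 ≤ a) (r : ℕ) (hr1 : 1 ≤ r) (hrlt : r < 2^a) :
    ∃ c : ZMod (2^a), c * (r : ZMod (2^a)) = ((2^(a-1) : ℕ) : ZMod (2^a)) := by
  haveI : NeZero (2^a) := ⟨(pow_pos two_pos a).ne'⟩
  set b := r.factorization 2 with hb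
  obtain ⟨u, hu⟩ := Nat.ordProj_dvd r 2
  have h2b : 0 < 2^b := pow_pos two_pos b
  have huval : u = r / 2 ^ b := by
    rw [hu]; exact (Nat.mul_div_cancel_left u h2b).symm
  have hunot : ¬ 2 ∣ u := by
    rw [huval]; exact Nat.not_dvd_ordCompl Nat.prime_two (by omega)
  have hba : b < a := by
    by_contra h
    have h1 : 2 ^ a ≤ 2 ^ b := Nat.pow_le_pow_right two_pos (le_of_not_gt h)
    have h2 : 2 ^ b ≤ r := Nat.le_of_dvd hr1 ⟨u, hu⟩
    omega
  have hcop : Nat.Coprime u (2^a) :=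
    (((Nat.Prime.coprime_iff_not_dvd Nat.prime_two).mpr hunot).symm).pow_right a
  obtain ⟨uu, huu⟩ := (ZMod.isUnit_iff_coprime u (2^a)).mpr hcop
  refine ⟨((2^(a-1-b) : ℕ) : ZMod (2^a)) * ↑uu⁻¹, ?_⟩
  have hr' : (r : ZMod (2^a)) = ((2^b : ℕ) : ZMod (2^a)) * (u : ZMod (2^a)) := by
    rw [hu]; push_cast; ring
  rw [hr']
  have h1 : (↑uu⁻¹ : ZMod (2^a)) * (u : ZMod (2^a)) = 1 := by
    rw [← huu, ← Units.val_mul, inv_mul_cancel, Units.val_one]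
  calc ((2^(a-1-b) : ℕ) : ZMod (2^a)) * ↑uu⁻¹ * (((2^b : ℕ) : ZMod (2^a)) * (u : ZMod (2^a)))
      = ((2^(a-1-b) : ℕ) : ZMod (2^a)) * ((2^b : ℕ) : ZMod (2^a)) * ((↑uu⁻¹ : ZMod (2^a)) * u) := by ring
    _ = ((2^(a-1-b) * 2^b : ℕ) : ZMod (2^a)) := by rw [h1, mul_one]; push_cast; ring
    _ = ((2^(a-1) : ℕ) : ZMod (2^a)) := by congr 1; rw [← pow_add]; congr 1; omega


/-- Let `m = 2^a` for some `a ≥ 1`, let `A` be a partial cyclic pair set in `ℤ/m`, and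
let `x` be the maximal point of `A`.  Then for every `1 ≤ r ≤ m − 1`, the point
`x − r` is not an `r`-maximal point of `A`. -/
theorem statement16 (a : ℕ) (ha : 1 ≤ a) (A : Set (ZMod (2 ^ a)))
    (hA : IsPartialPairSet (2 ^ a) A) (x : ZMod (2 ^ a))
    (hx : IsMaxPt (2 ^ a) A (2 ^ a) x)
    (r : ℕ) (hr1 : 1 ≤ r) (hr2 : r ≤ 2 ^ a - 1) :
    ¬ IsMaxPt (2 ^ a) A r (x - (r : ZMod (2 ^ a))) := by
  intro hmax
  have hm0 : 0 < 2 ^ a := pow_pos two_pos a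
  haveI : NeZero (2 ^ a) := ⟨hm0.ne'⟩
  have hm2 : 2 ≤ 2 ^ a := by calc 2 = 2^1 := (pow_one 2).symm
                                 _ ≤ 2^a := Nat.pow_le_pow_right two_pos ha
  have hrlt : r < 2 ^ a := by omega
  rcases hx (x - (r : ZMod (2 ^ a))) with heq | ⟨i, hiX, hiY, hag⟩
  · -- full windows equal: A is invariant under subtracting r
    have hshift : ∀ z : ZMod (2 ^ a), z ∈ A → z - (r : ZMod (2 ^ a)) ∈ A := by
      intro z hz
      have hjlt : (z - x).val < 2 ^ a := ZMod.val_lt _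
      have hj : (((z - x).val : ℕ) : ZMod (2 ^ a)) = z - x := ZMod.natCast_rightInverse _
      have h1 : (z - x).val ∈ restrictSet (2 ^ a) A x (2 ^ a) := by
        refine ⟨hjlt, ?_⟩
        rw [hj]
        simpa using hz
      rw [← heq] at h1
      obtain ⟨-, h2⟩ := h1
      have he : x - (r : ZMod (2 ^ a)) + (((z - x).val : ℕ) : ZMod (2 ^ a)) = z - r := by
        rw [hj]; ring
      rwa [he] at h2
    have inv : ∀ k : ℕ, ∀ z ∈ A, z - (k : ZMod (2 ^ a)) * (r : ZMod (2 ^ a)) ∈ A := by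
      intro k
      induction k with
      | zero => intro z hz; simpa using hz
      | succ n ih =>
        intro z hz
        have := hshift _ (ih z hz)
        have he : z - ((n+1 : ℕ) : ZMod (2 ^ a)) * r
            = z - (n : ZMod (2 ^ a)) * r - r := by push_cast; ring
        rwa [he]
    obtain ⟨c, hc⟩ := exists_half a ha r hr1 hrlt
    obtain ⟨z0, hz0⟩ := hA.1
    have h1 := inv c.val z0 hz0
    rw [ZMod.natCast_rightInverse c, hc] at h1
    refine hA.2 (z0 - ((2^(a-1) : ℕ) : ZMod (2 ^ a))) ⟨h1, ?_⟩
    have hhalf : 2 ^ a / 2 = 2 ^ (a - 1) := by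
      have : 2 ^ a = 2 ^ (a-1) * 2 := by rw [← pow_succ]; congr 1; omega
      omega
    show z0 - ((2^(a-1) : ℕ) : ZMod (2 ^ a)) + ((2 ^ a / 2 : ℕ) : ZMod (2 ^ a)) ∈ A
    rw [hhalf]
    simpa using hz0
  · -- first difference at i
    obtain ⟨him, hxiA⟩ := hiX
    have hyiA : x - (r : ZMod (2 ^ a)) + (i : ZMod (2 ^ a)) ∉ A := fun h => hiY ⟨him, h⟩
    have hagA : ∀ j < i, (x - (r : ZMod (2 ^ a)) + (j : ZMod (2 ^ a)) ∈ A ↔ x + (j : ZMod (2 ^ a)) ∈ A) := by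
      intro j hj
      have h1 := hag j hj
      simp only [restrictSet, Set.mem_setOf_eq] at h1
      have hjm : j < 2 ^ a := lt_trans hj him
      constructor
      · intro h; exact (h1.mp ⟨hjm, h⟩).2
      · intro h; exact (h1.mpr ⟨hjm, h⟩).2
    have hesub : ∀ j : ℕ, r ≤ j →
        x - (r : ZMod (2 ^ a)) + (j : ZMod (2 ^ a)) = x + ((j - r : ℕ) : ZMod (2 ^ a)) := by
      intro j hj
      have : (j : ZMod (2 ^ a)) = ((j - r : ℕ) : ZMod (2 ^ a)) + (r : ZMod (2 ^ a)) := by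
        rw [← Nat.cast_add]; congr 1; omega
      rw [this]; ring
    have H : ∀ j, j < i → (x + (j : ZMod (2 ^ a)) ∈ A ↔ x + ((j % r : ℕ) : ZMod (2 ^ a)) ∈ A) := by
      intro j
      induction j using Nat.strong_induction_on with
      | _ j ih =>
        intro hj
        rcases lt_or_ge j r with h | h
        · rw [Nat.mod_eq_of_lt h]
        · have e2 : x + (j : ZMod (2 ^ a)) ∈ A ↔ x + ((j - r : ℕ) : ZMod (2 ^ a)) ∈ A := by
            rw [← hesub j h]; exact (hagA j hj).symm
          rw [Nat.mod_eq_sub_mod h]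
          exact e2.trans (ih (j - r) (by omega) (by omega))
    set i0 := i % r with hi0
    have hi0r : i0 < r := Nat.mod_lt _ hr1
    have hi0i : i0 ≤ i := Nat.mod_le _ _
    have hyi0 : x - (r : ZMod (2 ^ a)) + (i0 : ZMod (2 ^ a)) ∉ A := by
      rcases lt_or_ge i r with h | h
      · rw [hi0, Nat.mod_eq_of_lt h]; exact hyiA
      · have h1 : x + ((i - r : ℕ) : ZMod (2 ^ a)) ∉ A := by
          rw [← hesub i h]; exact hyiA
        have h2 := H (i - r) (by omega)
        rw [← Nat.mod_eq_sub_mod h] at h2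
        have hxi0 : x + ((i0 : ℕ) : ZMod (2 ^ a)) ∉ A := fun hh => h1 (h2.mpr hh)
        intro hh
        exact hxi0 ((hagA i0 (by omega)).mp hh)
    -- the window starting at x + (i - i0) beats the window at x - r
    have hmaxw := hmax (x + ((i - i0 : ℕ) : ZMod (2 ^ a)))
    have hdiv : i - i0 = r * (i / r) := by
      have := Nat.div_add_mod i r; omega
    refine lex_contra hmaxw (i := i0) ⟨hi0r, ?_⟩ (fun hh => hyi0 hh.2) ?_
    · have : x + ((i - i0 : ℕ) : ZMod (2 ^ a)) + (i0 : ZMod (2 ^ a)) = x + (i : ZMod (2 ^ a)) := by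
        rw [add_assoc, ← Nat.cast_add]; congr 2; omega
      rw [this]; exact hxiA
    · intro j hj
      have hjr : j < r := lt_trans hj hi0r
      have hlt : i - i0 + j < i := by omega
      have e1 : x + ((i - i0 : ℕ) : ZMod (2 ^ a)) + (j : ZMod (2 ^ a))
          = x + ((i - i0 + j : ℕ) : ZMod (2 ^ a)) := by
        rw [add_assoc, ← Nat.cast_add]
      have hmod : (i - i0 + j) % r = j := by
        rw [hdiv, Nat.mul_add_mod, Nat.mod_eq_of_lt hjr]
      simp only [restrictSet, Set.mem_setOf_eq]
      constructor
      · rintro ⟨-, hh⟩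
        refine ⟨hjr, ?_⟩
        rw [e1] at hh
        have := (H _ hlt).mp hh
        rw [hmod] at this
        exact (hagA j (by omega)).mpr this
      · rintro ⟨-, hh⟩
        refine ⟨hjr, ?_⟩
        rw [e1]
        have h2 := (hagA j (by omega)).mp hh
        have h3 := (H _ hlt).mpr (by rwa [hmod])
        exact h3
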